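/- Let k1, km1, k2, A1, A2 > 0 and set K_M := (km1 + k2)/k1 and A4 := min{A1, A1·A2/(K_M + A1)}. Let (S, C) : [0, ∞) → ℝ² be differentiable, satisfy the reduced system S' = -k1·A2·S + k1·S·C + km1·C, C' = k1·A2·S - k1·S·C - (km1 + k2)·C on [0, ∞), and satisfy 0 ≤ S(t), 0 ≤ C(t) ≤ A4 and S(t) + C(t) ≤ A1 for all t ≥ 0. Then (S(t), C(t)) → (0, 0) as t → ∞ (the origin is globally asymptotically attracting on the feasible region Ω1). -/

import Mathlib

theorem origin_globally_attracting
    (k1 km1 k2 A1 A2 : ℝ) (hk1 : 0 < k1) (hkm1 : 0 < km1) (hk2 : 0 < k2)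
    (hA1 : 0 < A1) (hA2 : 0 < A2)
    (K_M A4 : ℝ) (hKM : K_M = (km1 + k2) / k1)
    (hA4 : A4 = min A1 (A1 * A2 / (K_M + A1)))
    (S C : ℝ → ℝ)
    (hS : ∀ t : ℝ, 0 ≤ t →
      HasDerivWithinAt S (-k1 * A2 * S t + k1 * S t * C t + km1 * C t) (Set.Ici 0) t)
    (hC : ∀ t : ℝ, 0 ≤ t →
      HasDerivWithinAt C (k1 * A2 * S t - k1 * S t * C t - (km1 + k2) * C t) (Set.Ici 0) t)
    (hSnn : ∀ t : ℝ, 0 ≤ t → 0 ≤ S t)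
    (hCnn : ∀ t : ℝ, 0 ≤ t → 0 ≤ C t)
    (hCub : ∀ t : ℝ, 0 ≤ t → C t ≤ A4)
    (hsum : ∀ t : ℝ, 0 ≤ t → S t + C t ≤ A1) :
    Filter.Tendsto (fun t : ℝ => (S t, C t)) Filter.atTop (nhds (0, 0)) := by
  have hKMpos : 0 < K_M := by rw [hKM]; positivity
  set ε : ℝ := A2 - A4 with hεdef
  have hεpos : 0 < ε := by
    have h1 : A4 ≤ A1 * A2 / (K_M + A1) := by rw [hA4]; exact min_le_right _ _
    have h2 : A1 * A2 / (K_M + A1) < A2 := by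
      rw [div_lt_iff₀ (by linarith)]
      nlinarith
    simp only [hεdef]; linarith
  set α : ℝ := (2*km1 + k2)/(2*(km1+k2)) with hαdef
  have hα0 : 0 < α := by positivity
  have hα1 : α < 1 := by
    rw [hαdef, div_lt_one (by linarith)]; linarith
  have hαid : α * (km1 + k2) = km1 + k2/2 := by
    rw [hαdef]; field_simp
  set l : ℝ := min ((1-α)*k1*ε) (k2/(2*α)) with hldef
  have hl0 : 0 < l := lt_min (mul_pos (mul_pos (by linarith : (0:ℝ) < 1-α) hk1) hεpos) (by positivity)
  have hl1 : l ≤ (1-α)*k1*ε := min_le_left _ _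
  have hl2 : l * α ≤ k2/2 := by
    have h := min_le_right ((1-α)*k1*ε) (k2/(2*α))
    calc l * α ≤ (k2/(2*α)) * α := mul_le_mul_of_nonneg_right h hα0.le
      _ = k2/2 := by field_simp
  set V : ℝ → ℝ := fun t => S t + α * C t with hVdef
  set D : ℝ → ℝ := fun t =>
    (-k1 * A2 * S t + k1 * S t * C t + km1 * C t)
      + α * (k1 * A2 * S t - k1 * S t * C t - (km1 + k2) * C t) with hDdef
  have hVderiv : ∀ t ∈ Set.Ici (0:ℝ), HasDerivWithinAt V (D t) (Set.Ici 0) t :=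
    fun t ht => (hS t ht).add ((hC t ht).const_mul α)
  -- key Lyapunov bound: D t + l * V t ≤ 0
  have hkey : ∀ t : ℝ, 0 ≤ t → D t + l * V t ≤ 0 := by
    intro t ht
    have hs := hSnn t ht
    have hc := hCnn t ht
    have hcu : C t ≤ A2 - ε := by simp only [hεdef]; linarith [hCub t ht]
    have hαidc : α * (km1 + k2) * C t = (km1 + k2/2) * C t := by rw [hαid]
    have hint1 : 0 ≤ (1-α) * k1 * S t * ((A2 - ε) - C t) :=
      mul_nonneg (mul_nonneg (mul_nonneg (by linarith) hk1.le) hs) (by linarith)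
    have hint2 : 0 ≤ ((1-α)*k1*ε - l) * S t := mul_nonneg (by linarith) hs
    have hint3 : 0 ≤ (k2/2 - l*α) * C t := mul_nonneg (by linarith) hc
    simp only [hDdef, hVdef]
    nlinarith [hint1, hint2, hint3, hαidc]
  -- g = V * exp(l t) is antitone on [0, ∞)
  set g : ℝ → ℝ := fun t => V t * Real.exp (l * t) with hgdef
  have hexp : ∀ t : ℝ, HasDerivAt (fun t => Real.exp (l * t)) (Real.exp (l * t) * l) t := by
    intro t
    have h := ((hasDerivAt_id t).const_mul l).exp
    simpa using h
  have hgderiv : ∀ t ∈ Set.Ici (0:ℝ),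
      HasDerivWithinAt g (D t * Real.exp (l * t) + V t * (Real.exp (l * t) * l)) (Set.Ici 0) t :=
    fun t ht => (hVderiv t ht).mul ((hexp t).hasDerivWithinAt)
  have hgnonpos : ∀ t : ℝ, 0 ≤ t →
      D t * Real.exp (l * t) + V t * (Real.exp (l * t) * l) ≤ 0 := by
    intro t ht
    have he : 0 < Real.exp (l * t) := Real.exp_pos _
    have h := hkey t ht
    nlinarith [h, he]
  have hgcont : ContinuousOn g (Set.Ici 0) :=
    fun t ht => (hgderiv t ht).continuousWithinAt
  have hganti : AntitoneOn g (Set.Ici 0) := by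
    apply antitoneOn_of_deriv_nonpos (convex_Ici 0) hgcont
    · intro t ht
      rw [interior_Ici] at ht
      exact (((hgderiv t (Set.mem_Ici.mpr (le_of_lt ht))).hasDerivAt (Ici_mem_nhds ht)).differentiableAt).differentiableWithinAt
    · intro t ht
      rw [interior_Ici] at ht
      rw [((hgderiv t (Set.mem_Ici.mpr (le_of_lt ht))).hasDerivAt (Ici_mem_nhds ht)).deriv]
      exact hgnonpos t (le_of_lt ht)
  have hVnn : ∀ t : ℝ, 0 ≤ t → 0 ≤ V t := by
    intro t ht
    have := hSnn t ht
    have := hCnn t ht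
    simp only [hVdef]
    nlinarith
  have hVbound : ∀ t : ℝ, 0 ≤ t → V t ≤ V 0 * Real.exp (-(l * t)) := by
    intro t ht
    have hg0 : g t ≤ g 0 := hganti (Set.self_mem_Ici) ht ht
    have hg0' : V t * Real.exp (l * t) ≤ V 0 := by
      simpa [hgdef] using hg0
    rw [Real.exp_neg]
    calc V t ≤ V 0 / Real.exp (l * t) := by
          rw [le_div_iff₀ (Real.exp_pos _)]; exact hg0'
      _ = V 0 * (Real.exp (l * t))⁻¹ := by rw [div_eq_mul_inv]
  have hexp0 : Filter.Tendsto (fun t : ℝ => V 0 * Real.exp (-(l * t)))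
      Filter.atTop (nhds 0) := by
    have h1 : Filter.Tendsto (fun t : ℝ => l * t) Filter.atTop Filter.atTop :=
      Filter.Tendsto.const_mul_atTop hl0 Filter.tendsto_id
    have h2 : Filter.Tendsto (fun t : ℝ => -(l * t)) Filter.atTop Filter.atBot :=
      Filter.tendsto_neg_atBot_iff.mpr h1
    have h3 : Filter.Tendsto (fun t : ℝ => Real.exp (-(l * t))) Filter.atTop (nhds 0) :=
      Real.tendsto_exp_atBot.comp h2
    simpa using h3.const_mul (V 0)
  have hV0 : Filter.Tendsto V Filter.atTop (nhds 0) := by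
    apply tendsto_of_tendsto_of_tendsto_of_le_of_le' tendsto_const_nhds hexp0
    · filter_upwards [Filter.eventually_ge_atTop (0:ℝ)] with t ht
      exact hVnn t ht
    · filter_upwards [Filter.eventually_ge_atTop (0:ℝ)] with t ht
      exact hVbound t ht
  have hS0 : Filter.Tendsto S Filter.atTop (nhds 0) := by
    apply tendsto_of_tendsto_of_tendsto_of_le_of_le' tendsto_const_nhds hV0
    · filter_upwards [Filter.eventually_ge_atTop (0:ℝ)] with t ht
      exact hSnn t ht
    · filter_upwards [Filter.eventually_ge_atTop (0:ℝ)] with t ht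
      have := hCnn t ht
      simp only [hVdef]
      nlinarith
  have hC0 : Filter.Tendsto C Filter.atTop (nhds 0) := by
    have hdiv : Filter.Tendsto (fun t => V t / α) Filter.atTop (nhds 0) := by
      simpa using hV0.div_const α
    apply tendsto_of_tendsto_of_tendsto_of_le_of_le' tendsto_const_nhds hdiv
    · filter_upwards [Filter.eventually_ge_atTop (0:ℝ)] with t ht
      exact hCnn t ht
    · filter_upwards [Filter.eventually_ge_atTop (0:ℝ)] with t ht
      have := hSnn t ht
      rw [le_div_iff₀ hα0]
      simp only [hVdef]
      nlinarith
  exact hS0.prodMk_nhds hC0
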